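/- Let X be the adjacency matrix of a spanning subgraph of a directed graph on n nodes in which every node has in-degree and out-degree one (i.e., X is a permutation matrix with zero diagonal), and suppose β I_n + α J_n − (1/2)(X + Xᵀ) ⪰ 0 for some β < 1 and α ∈ ℝ. Then X is the adjacency matrix of a single directed Hamiltonian cycle (the permutation is an n-cycle). -/

import Mathlib

open Matrix

theorem psd_certificate_implies_hamiltonian {n : ℕ} (hn : 0 < n)
    (σ : Equiv.Perm (Fin n)) (hfix : ∀ i, σ i ≠ i)
    (X : Matrix (Fin n) (Fin n) ℝ)
    (hX : ∀ i j, X i j = if σ i = j then 1 else 0)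
    (α β : ℝ) (hβ : β < 1)
    (hpsd : (β • (1 : Matrix (Fin n) (Fin n) ℝ)
      + α • (Matrix.of fun _ _ => (1 : ℝ))
      - (1 / 2 : ℝ) • (X + Xᵀ)).PosSemidef) :
    σ.IsCycle ∧ σ.support = Finset.univ := by
  classical
  have hsupp : σ.support = Finset.univ := by
    ext i; simp [Equiv.Perm.mem_support, hfix i]
  refine ⟨?_, hsupp⟩
  by_contra hnc
  obtain ⟨x⟩ : Nonempty (Fin n) := ⟨⟨0, hn⟩⟩
  have hexy : ∃ y, ¬ σ.SameCycle x y := by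
    by_contra h
    push_neg at h
    exact hnc ⟨x, hfix x, fun y _ => h y⟩
  obtain ⟨y, hy⟩ := hexy
  set S : Finset (Fin n) := Finset.univ.filter (fun i => σ.SameCycle x i) with hS
  have hxS : x ∈ S := by simp [hS, Equiv.Perm.SameCycle.refl]
  have hyS : y ∉ S := by simp [hS, hy]
  have hcard1 : 0 < S.card := Finset.card_pos.mpr ⟨x, hxS⟩
  have hcardlt : S.card < n := by
    have : S ⊂ Finset.univ := Finset.ssubset_univ_iff.mpr (fun h => hyS (h ▸ Finset.mem_univ y))
    simpa using Finset.card_lt_card this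
  set v : Fin n → ℝ := fun i => if σ.SameCycle x i then ((n : ℝ) - S.card) else -(S.card : ℝ)
    with hv
  have hinv : ∀ i, v (σ i) = v i := by
    intro i
    simp only [hv, Equiv.Perm.sameCycle_apply_right]
  have hsum : ∑ i, v i = 0 := by
    rw [hv]
    rw [Finset.sum_ite]
    simp only [Finset.sum_const, nsmul_eq_mul]
    have h1 : Finset.univ.filter (fun i => σ.SameCycle x i) = S := rfl
    have h2 : (Finset.univ.filter (fun i => ¬ σ.SameCycle x i)).card = n - S.card := by
      rw [Finset.filter_not, Finset.card_sdiff_of_subset (Finset.filter_subset _ _)]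
      simp [h1]
    rw [h1, h2]
    have : ((n - S.card : ℕ) : ℝ) = (n : ℝ) - S.card := by
      push_cast [Nat.cast_sub hcardlt.le]; ring
    rw [this]; ring
  -- compute M *ᵥ v
  set M := (β • (1 : Matrix (Fin n) (Fin n) ℝ)
      + α • (Matrix.of fun _ _ => (1 : ℝ))
      - (1 / 2 : ℝ) • (X + Xᵀ)) with hM
  have hXv : X *ᵥ v = v := by
    funext i
    have : (X *ᵥ v) i = ∑ j, (if σ i = j then (1:ℝ) else 0) * v j := by
      simp [mulVec, dotProduct, hX]
    rw [this]
    have : ∑ j, (if σ i = j then (1:ℝ) else 0) * v j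
        = ∑ j, (if σ i = j then v j else 0) := by
      apply Finset.sum_congr rfl; intro j _; split <;> simp
    rw [this, Finset.sum_ite_eq]
    simp [hinv i]
  have hXtv : Xᵀ *ᵥ v = v := by
    funext i
    have h1 : (Xᵀ *ᵥ v) i = ∑ j, (if σ j = i then (1:ℝ) else 0) * v j := by
      simp [mulVec, dotProduct, hX, transpose]
    rw [h1]
    have h2 : ∑ j, (if σ j = i then (1:ℝ) else 0) * v j
        = ∑ j, (if j = σ⁻¹ i then v j else 0) := by
      apply Finset.sum_congr rfl; intro j _
      have h3 : (σ j = i) ↔ (j = σ⁻¹ i) := Equiv.apply_eq_iff_eq_symm_apply σ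
      simp only [h3]; split <;> simp
    rw [h2, Finset.sum_ite_eq']
    have := hinv (σ⁻¹ i)
    rw [show σ (σ⁻¹ i) = i from σ.apply_symm_apply i] at this
    simp [this]
  have hJv : (Matrix.of fun _ _ => (1 : ℝ) : Matrix (Fin n) (Fin n) ℝ) *ᵥ v = 0 := by
    funext i
    simp [mulVec, dotProduct, hsum]
  have hMv : M *ᵥ v = (β - 1) • v := by
    rw [hM]
    rw [sub_mulVec, add_mulVec, smul_mulVec, smul_mulVec, smul_mulVec,
      one_mulVec, hJv, add_mulVec, hXv, hXtv]
    funext i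
    simp [sub_smul]
    ring
  have hquad := hpsd.dotProduct_mulVec_nonneg v
  rw [hMv] at hquad
  have hdot : star v ⬝ᵥ ((β - 1) • v) = (β - 1) * ∑ i, v i ^ 2 := by
    simp [dotProduct, Finset.mul_sum]
    apply Finset.sum_congr rfl
    intro i _; ring
  rw [hdot] at hquad
  have hpos : 0 < ∑ i, v i ^ 2 := by
    apply Finset.sum_pos' (fun i _ => sq_nonneg _) ⟨x, Finset.mem_univ x, ?_⟩
    have hvx : v x = (n : ℝ) - S.card := by simp [hv, Equiv.Perm.SameCycle.refl]
    rw [hvx]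
    have h4 : (S.card : ℝ) < n := by exact_mod_cast hcardlt
    nlinarith
  nlinarith
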